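/- Let α ∈ (0,2]. Let Λ be a standard Laplace random variable and let S, S' be independent positive strictly stable random variables with exponent α/2, each having the same distribution, with Λ, S, S' mutually independent. Then Λ·√(S/S') has the Linnik distribution with parameter α, i.e., E[exp(i·t·Λ·√(S/S'))] = 1/(1+|t|^α) for all t ∈ ℝ. -/

import Mathlib

open MeasureTheory ProbabilityTheory Filter Set
open scoped Topology ENNReal

/-- FTC helper: integral of `δ c u^(δ-1) exp(-(c u^δ))` over `Ioi a`. -/
lemma ftcA {δ c : ℝ} (hδ : 0 < δ) (hc : 0 < c) {a : ℝ} (ha : 0 ≤ a) :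
    IntegrableOn (fun u : ℝ => δ * c * u ^ (δ-1) * Real.exp (-(c * u ^ δ))) (Ioi a) volume ∧
    ∫ u in Ioi a, δ * c * u ^ (δ-1) * Real.exp (-(c * u ^ δ)) = Real.exp (-(c * a ^ δ)) := by
  set g : ℝ → ℝ := fun u => -Real.exp (-(c * u ^ δ)) with hg
  have hcont : ContinuousWithinAt g (Ici a) a := by
    have h1 : ContinuousAt (fun u : ℝ => u ^ δ) a :=
      Real.continuousAt_rpow_const a δ (Or.inr hδ.le)
    have h2 : ContinuousAt (fun u : ℝ => -(c * u ^ δ)) a :=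
      ((h1.const_mul c).neg : _)
    exact ((Real.continuous_exp.continuousAt.comp h2).neg).continuousWithinAt
  have hderiv : ∀ x ∈ Ioi a, HasDerivAt g (δ * c * x ^ (δ-1) * Real.exp (-(c * x ^ δ))) x := by
    intro x hx
    have hx0 : 0 < x := lt_of_le_of_lt ha hx
    have h1 : HasDerivAt (fun u : ℝ => u ^ δ) (δ * x ^ (δ-1)) x :=
      Real.hasDerivAt_rpow_const (Or.inl hx0.ne')
    have h2 : HasDerivAt (fun u : ℝ => -(c * u ^ δ)) (-(c * (δ * x ^ (δ-1)))) x :=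
      (h1.const_mul c).neg
    have h3 := h2.exp
    have h4 := h3.neg
    refine h4.congr_deriv ?_
    ring
  have hpos : ∀ x ∈ Ioi a, 0 ≤ δ * c * x ^ (δ-1) * Real.exp (-(c * x ^ δ)) := by
    intro x hx
    have hx0 : (0:ℝ) ≤ x := le_of_lt (lt_of_le_of_lt ha hx)
    positivity
  have htop : Tendsto g atTop (𝓝 0) := by
    have h1 : Tendsto (fun u : ℝ => c * u ^ δ) atTop atTop :=
      (tendsto_rpow_atTop hδ).const_mul_atTop hc
    have h2 : Tendsto (fun u : ℝ => Real.exp (-(c * u ^ δ))) atTop (𝓝 0) :=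
      Real.tendsto_exp_atBot.comp (tendsto_neg_atTop_atBot.comp h1)
    simpa using h2.neg
  refine ⟨integrableOn_Ioi_deriv_of_nonneg hcont hderiv hpos htop, ?_⟩
  rw [integral_Ioi_of_hasDerivAt_of_nonneg hcont hderiv hpos htop]
  simp [g]

/-- exponential integral over `Ioi a`. -/
lemma expInt {r : ℝ} (hr : 0 < r) {a : ℝ} (ha : 0 ≤ a) :
    IntegrableOn (fun x : ℝ => Real.exp (-(x * r))) (Ioi a) volume ∧
    ∫ x in Ioi a, Real.exp (-(x * r)) = Real.exp (-(a * r)) / r := by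
  have h := ftcA one_pos hr ha
  have hfun : (fun u : ℝ => (1:ℝ) * r * u ^ ((1:ℝ)-1) * Real.exp (-(r * u ^ (1:ℝ))))
      = fun u : ℝ => r * Real.exp (-(u * r)) := by
    funext u
    rw [show ((1:ℝ)-1) = 0 by norm_num, Real.rpow_zero, Real.rpow_one]
    ring_nf
  rw [hfun] at h
  constructor
  · have := h.1.const_mul r⁻¹
    have heq : (fun x : ℝ => r⁻¹ * (r * Real.exp (-(x * r)))) = fun x : ℝ => Real.exp (-(x * r)) := by
      funext x; field_simp
    rwa [heq] at this
  · have h2 := h.2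
    rw [integral_const_mul] at h2
    have : Real.exp (-(r * a ^ (1:ℝ))) = Real.exp (-(a * r)) := by
      rw [Real.rpow_one]; ring_nf
    rw [this] at h2
    field_simp at h2 ⊢
    linarith [h2]

/-- bounded measurable functions are integrable on probability spaces -/
lemma int_of_bdd {Ω : Type*} [MeasurableSpace Ω] {P : Measure Ω} [IsProbabilityMeasure P]
    {f : Ω → ℝ} (hm : AEStronglyMeasurable f P) {C : ℝ} (h : ∀ᵐ ω ∂P, ‖f ω‖ ≤ C) :
    Integrable f P :=
  (integrable_const C).mono' hm h

/-- positivity from the Laplace transform -/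
lemma pos_of_laplace {Ω : Type*} [MeasurableSpace Ω] {P : Measure Ω} [IsProbabilityMeasure P]
    {B : Ω → ℝ} (hBm : Measurable B) (hBnn : ∀ᵐ ω ∂P, 0 ≤ B ω) {δ : ℝ} (hδ : 0 < δ)
    (hB : ∀ s : ℝ, 0 ≤ s → ∫ ω, Real.exp (-(s * B ω)) ∂P = Real.exp (-(s ^ δ))) :
    ∀ᵐ ω ∂P, 0 < B ω := by
  have key : ∀ n : ℕ, P {ω | B ω ≤ 0} ≤ ENNReal.ofReal (Real.exp (-((n:ℝ) ^ δ))) := by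
    intro n
    have hint : Integrable (fun ω => Real.exp (-((n:ℝ) * B ω))) P := by
      apply int_of_bdd ((Real.measurable_exp.comp ((hBm.const_mul (n:ℝ)).neg)).aestronglyMeasurable) (C := 1)
      filter_upwards [hBnn] with ω hω
      simp only [Function.comp_apply, Real.norm_eq_abs, abs_of_nonneg (Real.exp_nonneg _)]
      exact Real.exp_le_one_iff.mpr (neg_nonpos.mpr (by positivity))
    have h1 : P {ω | B ω ≤ 0} ≤ ∫⁻ ω, ENNReal.ofReal (Real.exp (-((n:ℝ) * B ω))) ∂P := by
      have hms : MeasurableSet {ω | B ω ≤ 0} := hBm measurableSet_Iic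
      have : P {ω | B ω ≤ 0} = ∫⁻ ω, ({ω | B ω ≤ 0}).indicator (fun _ => (1:ℝ≥0∞)) ω ∂P := by
        rw [lintegral_indicator hms, setLIntegral_one]
      rw [this]
      apply lintegral_mono
      intro ω
      by_cases hω : ω ∈ {ω | B ω ≤ 0}
      · rw [indicator_of_mem hω]
        rw [show (1:ℝ≥0∞) = ENNReal.ofReal (Real.exp 0) by simp]
        apply ENNReal.ofReal_le_ofReal
        apply Real.exp_le_exp.mpr
        have : (n:ℝ) * B ω ≤ 0 := mul_nonpos_of_nonneg_of_nonpos (by positivity) hω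
        linarith
      · rw [indicator_of_notMem hω]; exact zero_le
    have h2 : ∫⁻ ω, ENNReal.ofReal (Real.exp (-((n:ℝ) * B ω))) ∂P
        = ENNReal.ofReal (Real.exp (-((n:ℝ) ^ δ))) := by
      rw [← ofReal_integral_eq_lintegral_ofReal hint
        (ae_of_all _ fun ω => Real.exp_nonneg _), hB n (by positivity)]
    rw [← h2]; exact h1
  have hlim : Tendsto (fun n : ℕ => ENNReal.ofReal (Real.exp (-((n:ℝ) ^ δ)))) atTop (𝓝 0) := by
    rw [show (0:ℝ≥0∞) = ENNReal.ofReal 0 by simp]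
    apply ENNReal.tendsto_ofReal
    apply Real.tendsto_exp_atBot.comp
    apply tendsto_neg_atTop_atBot.comp
    exact (tendsto_rpow_atTop hδ).comp tendsto_natCast_atTop_atTop
  have hzero : P {ω | B ω ≤ 0} = 0 :=
    le_antisymm (ge_of_tendsto' hlim (fun n => key n) : P {ω | B ω ≤ 0} ≤ 0) zero_le
  filter_upwards [hBnn, (ae_iff.mpr (by simpa using hzero) : ∀ᵐ ω ∂P, ¬ (B ω ≤ 0))] with ω h1 h2
  exact lt_of_not_ge (fun h => h2 (le_of_eq (le_antisymm h h1 ▸ rfl)))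

lemma core {Ω : Type*} [MeasurableSpace Ω] (P : Measure Ω) [IsProbabilityMeasure P]
    {δ : ℝ} (hδ : 0 < δ) {A B : Ω → ℝ} (hAm : Measurable A) (hBm : Measurable B)
    (hindep : IndepFun B A P)
    (hAnn : ∀ᵐ ω ∂P, 0 ≤ A ω) (hBnn : ∀ᵐ ω ∂P, 0 ≤ B ω)
    (hA : ∀ s : ℝ, 0 ≤ s → ∫ ω, Real.exp (-(s * A ω)) ∂P = Real.exp (-(s ^ δ)))
    (hB : ∀ s : ℝ, 0 ≤ s → ∫ ω, Real.exp (-(s * B ω)) ∂P = Real.exp (-(s ^ δ)))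
    {l : ℝ} (hl : 0 < l) :
    ∫ ω, (1 + l * (A ω / B ω))⁻¹ ∂P = (1 + l ^ δ)⁻¹ := by
  have hBpos := pos_of_laplace hBm hBnn hδ hB
  have hlδ : 0 < l ^ δ := Real.rpow_pos_of_pos hl δ
  set M : ℝ → ℝ≥0∞ := fun x => ∫⁻ ω, ENNReal.ofReal (B ω * Real.exp (-(x * B ω))) ∂P with hM
  set W : ℝ → ℝ≥0∞ :=
    fun u => ENNReal.ofReal (δ * l ^ δ * u ^ (δ - 1) * Real.exp (-(l ^ δ * u ^ δ))) with hW
  have hMmeas : Measurable M := by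
    have h : Measurable (fun p : ℝ × Ω => ENNReal.ofReal (B p.2 * Real.exp (-(p.1 * B p.2)))) := by
      fun_prop
    exact Measurable.lintegral_prod_right
      (f := fun x ω => ENNReal.ofReal (B ω * Real.exp (-(x * B ω)))) h
  have hWmeas : Measurable W := by fun_prop
  -- fact1 : tail integrals of M
  have fact1 : ∀ a : ℝ, 0 ≤ a →
      ∫⁻ x in Ioi a, M x = ENNReal.ofReal (Real.exp (-(a ^ δ))) := by
    intro a ha
    have hmeas : Measurable (fun p : ℝ × Ω => ENNReal.ofReal (B p.2 * Real.exp (-(p.1 * B p.2)))) := by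
      fun_prop
    have hswap : ∫⁻ x in Ioi a, M x ∂volume
        = ∫⁻ ω, (∫⁻ x in Ioi a, ENNReal.ofReal (B ω * Real.exp (-(x * B ω)))) ∂P :=
      lintegral_lintegral_swap hmeas.aemeasurable
    rw [hswap]
    have h1 : ∀ᵐ ω ∂P, (∫⁻ x in Ioi a, ENNReal.ofReal (B ω * Real.exp (-(x * B ω))))
        = ENNReal.ofReal (Real.exp (-(a * B ω))) := by
      filter_upwards [hBpos] with ω hb
      have hei := expInt hb ha
      rw [← ofReal_integral_eq_lintegral_ofReal (hei.1.const_mul _)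
        (ae_of_all _ fun x => by positivity), integral_const_mul, hei.2]
      congr 1
      field_simp
    rw [lintegral_congr_ae h1,
      ← ofReal_integral_eq_lintegral_ofReal ?hint (ae_of_all _ fun ω => Real.exp_nonneg _),
      hB a ha]
    case hint =>
      apply int_of_bdd ((Real.measurable_exp.comp ((hBm.const_mul a).neg)).aestronglyMeasurable) (C := 1)
      filter_upwards [hBnn] with ω h
      simp only [Function.comp_apply, Real.norm_eq_abs, abs_of_nonneg (Real.exp_nonneg _)]
      exact Real.exp_le_one_iff.mpr (neg_nonpos.mpr (by positivity))
  -- Step 1 : pointwise identity, Bochner integrand → double lintegral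
  have eq1 : ∫⁻ ω, ENNReal.ofReal ((1 + l * (A ω / B ω))⁻¹) ∂P
      = ∫⁻ ω, (∫⁻ x in Ioi (0:ℝ),
          ENNReal.ofReal (B ω * Real.exp (-(x * B ω)))
            * ENNReal.ofReal (Real.exp (-((l * x) * A ω)))) ∂P := by
    apply lintegral_congr_ae
    filter_upwards [hAnn, hBpos] with ω ha hb
    have hr : 0 < B ω + l * A ω := by positivity
    have hei := expInt hr (le_refl (0:ℝ))
    have hfun : ∀ x : ℝ, ENNReal.ofReal (B ω * Real.exp (-(x * B ω)))
          * ENNReal.ofReal (Real.exp (-((l * x) * A ω)))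
        = ENNReal.ofReal (B ω * Real.exp (-(x * (B ω + l * A ω)))) := by
      intro x
      rw [← ENNReal.ofReal_mul (by positivity)]
      congr 1
      rw [mul_assoc, ← Real.exp_add]
      congr 2
      ring
    simp_rw [hfun]
    rw [← ofReal_integral_eq_lintegral_ofReal (hei.1.const_mul _)
      (ae_of_all _ fun x => by positivity), integral_const_mul, hei.2]
    congr 1
    rw [zero_mul, neg_zero, Real.exp_zero,
      show 1 + l * (A ω / B ω) = (B ω + l * A ω) / B ω by field_simp, inv_div]
    rw [eq_comm, mul_comm, div_mul_eq_mul_div, div_eq_div_iff hr.ne' hr.ne']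
    ring
  -- Step 2 : swap, independence, A-Laplace transform
  have eq2 : ∫⁻ ω, (∫⁻ x in Ioi (0:ℝ),
          ENNReal.ofReal (B ω * Real.exp (-(x * B ω)))
            * ENNReal.ofReal (Real.exp (-((l * x) * A ω)))) ∂P
      = ∫⁻ x in Ioi (0:ℝ), M x * ENNReal.ofReal (Real.exp (-((l * x) ^ δ))) := by
    have hmeas : Measurable (fun p : Ω × ℝ =>
        ENNReal.ofReal (B p.1 * Real.exp (-(p.2 * B p.1)))
          * ENNReal.ofReal (Real.exp (-((l * p.2) * A p.1)))) := by fun_prop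
    rw [lintegral_lintegral_swap hmeas.aemeasurable]
    apply setLIntegral_congr_fun measurableSet_Ioi
    intro x hx
    have hx0 : 0 ≤ x := le_of_lt hx
    have hlx : 0 ≤ l * x := by positivity
    have hφ : Measurable (fun b : ℝ => ENNReal.ofReal (b * Real.exp (-(x * b)))) := by fun_prop
    have hψ : Measurable (fun a : ℝ => ENNReal.ofReal (Real.exp (-((l * x) * a)))) := by fun_prop
    have hfactor := lintegral_mul_eq_lintegral_mul_lintegral_of_indepFun
      (μ := P) (f := (fun b : ℝ => ENNReal.ofReal (b * Real.exp (-(x * b)))) ∘ B)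
      (g := (fun a : ℝ => ENNReal.ofReal (Real.exp (-((l * x) * a)))) ∘ A)
      (hφ.comp hBm) (hψ.comp hAm) (hindep.comp hφ hψ)
    have h2 : ∫⁻ ω, ENNReal.ofReal (Real.exp (-((l * x) * A ω))) ∂P
        = ENNReal.ofReal (Real.exp (-((l * x) ^ δ))) := by
      rw [← ofReal_integral_eq_lintegral_ofReal ?hint (ae_of_all _ fun ω => Real.exp_nonneg _),
        hA _ hlx]
      case hint =>
        apply int_of_bdd
          ((Real.measurable_exp.comp ((hAm.const_mul (l*x)).neg)).aestronglyMeasurable) (C := 1)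
        filter_upwards [hAnn] with ω h
        simp only [Function.comp_apply, Real.norm_eq_abs, abs_of_nonneg (Real.exp_nonneg _)]
        exact Real.exp_le_one_iff.mpr (neg_nonpos.mpr (by positivity))
    calc ∫⁻ ω, ENNReal.ofReal (B ω * Real.exp (-(x * B ω)))
            * ENNReal.ofReal (Real.exp (-((l * x) * A ω))) ∂P
        = (∫⁻ ω, ENNReal.ofReal (B ω * Real.exp (-(x * B ω))) ∂P)
            * ∫⁻ ω, ENNReal.ofReal (Real.exp (-((l * x) * A ω))) ∂P := hfactor
      _ = M x * ENNReal.ofReal (Real.exp (-((l * x) ^ δ))) := by rw [hM, h2]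
  -- Step 3 : W-decomposition of the exp factor
  have eq3 : ∀ x : ℝ, 0 < x →
      ENNReal.ofReal (Real.exp (-((l * x) ^ δ))) = ∫⁻ u in Ioi x, W u := by
    intro x hx
    have hf := ftcA hδ hlδ hx.le
    have hmr : (l * x) ^ δ = l ^ δ * x ^ δ := Real.mul_rpow hl.le hx.le
    have hnn : 0 ≤ᵐ[volume.restrict (Ioi x)]
        fun u => δ * l ^ δ * u ^ (δ - 1) * Real.exp (-(l ^ δ * u ^ δ)) := by
      rw [EventuallyLE, ae_restrict_iff' measurableSet_Ioi]
      apply ae_of_all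
      intro u hu
      have hu0 : 0 < u := lt_trans hx hu
      positivity
    rw [hmr, ← hf.2, ofReal_integral_eq_lintegral_ofReal hf.1 hnn]
  -- the kernel for the two-variable swap
  set K : ℝ × ℝ → ℝ≥0∞ := fun p => if p.1 < p.2 then M p.1 * W p.2 else 0 with hK
  have hKmeas : Measurable K :=
    Measurable.ite (measurableSet_lt measurable_fst measurable_snd)
      ((hMmeas.comp measurable_fst).mul (hWmeas.comp measurable_snd)) measurable_const
  have step_a : ∀ x : ℝ, 0 ≤ x →
      ∫⁻ u in Ioi (0:ℝ), K (x, u) = M x * ∫⁻ u in Ioi x, W u := by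
    intro x hx
    have h1 : ∀ u, K (x, u) = (Ioi x).indicator (fun u => M x * W u) u := by
      intro u
      by_cases h : x < u
      · simp [hK, h, indicator_of_mem, mem_Ioi]
      · simp [hK, h, mem_Ioi]
    simp_rw [h1]
    rw [lintegral_indicator measurableSet_Ioi, Measure.restrict_restrict measurableSet_Ioi,
      Ioi_inter_Ioi, sup_eq_left.mpr hx, lintegral_const_mul _ hWmeas]
  have step_b : ∀ u : ℝ,
      ∫⁻ x in Ioi (0:ℝ), K (x, u) = (∫⁻ x in Ioo 0 u, M x) * W u := by
    intro u
    have h1 : ∀ x, K (x, u) = (Iio u).indicator (fun x => M x * W u) x := by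
      intro x
      by_cases h : x < u
      · simp [hK, h, indicator_of_mem, mem_Iio]
      · simp [hK, h, mem_Iio]
    simp_rw [h1]
    rw [lintegral_indicator measurableSet_Iio, Measure.restrict_restrict measurableSet_Iio,
      Iio_inter_Ioi, lintegral_mul_const _ hMmeas]
  have eq4 : ∫⁻ x in Ioi (0:ℝ), M x * ENNReal.ofReal (Real.exp (-((l * x) ^ δ)))
      = ∫⁻ u in Ioi (0:ℝ), (∫⁻ x in Ioo 0 u, M x) * W u := by
    calc ∫⁻ x in Ioi (0:ℝ), M x * ENNReal.ofReal (Real.exp (-((l * x) ^ δ)))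
        = ∫⁻ x in Ioi (0:ℝ), ∫⁻ u in Ioi (0:ℝ), K (x, u) := by
          apply setLIntegral_congr_fun measurableSet_Ioi
          intro x hx
          dsimp only
          rw [step_a x (le_of_lt hx), ← eq3 x hx]
      _ = ∫⁻ u in Ioi (0:ℝ), ∫⁻ x in Ioi (0:ℝ), K (x, u) :=
          lintegral_lintegral_swap hKmeas.aemeasurable
      _ = ∫⁻ u in Ioi (0:ℝ), (∫⁻ x in Ioo 0 u, M x) * W u := by
          apply setLIntegral_congr_fun measurableSet_Ioi
          exact fun u _ => step_b u
  -- value of the inner integral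
  have claim2 : ∀ u : ℝ, 0 < u →
      ∫⁻ x in Ioo 0 u, M x = ENNReal.ofReal (1 - Real.exp (-(u ^ δ))) := by
    intro u hu
    have hdisj : Disjoint (Ioo (0:ℝ) u) (Ici u) :=
      disjoint_left.mpr fun x hx h2 => absurd h2 (not_le.mpr hx.2)
    have hsplit : (∫⁻ x in Ioo (0:ℝ) u, M x) + (∫⁻ x in Ici u, M x) = ∫⁻ x in Ioi (0:ℝ), M x := by
      rw [← Ioo_union_Ici_eq_Ioi hu, lintegral_union measurableSet_Ici hdisj]
    have hIci : ∫⁻ x in Ici u, M x = ENNReal.ofReal (Real.exp (-(u ^ δ))) := by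
      rw [← Measure.restrict_congr_set Ioi_ae_eq_Ici]
      exact fact1 u hu.le
    have hIoi : ∫⁻ x in Ioi (0:ℝ), M x = 1 := by
      rw [fact1 0 le_rfl, Real.zero_rpow hδ.ne', neg_zero, Real.exp_zero, ENNReal.ofReal_one]
    rw [hIci, hIoi] at hsplit
    have hsub := ENNReal.sub_eq_of_eq_add (ENNReal.ofReal_ne_top) hsplit.symm
    rw [← hsub, ENNReal.ofReal_sub _ (Real.exp_nonneg _), ENNReal.ofReal_one]
  -- final real computation
  have final_u : ∫⁻ u in Ioi (0:ℝ), (∫⁻ x in Ioo 0 u, M x) * W u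
      = ENNReal.ofReal ((1 + l ^ δ)⁻¹) := by
    have h1lδ : 0 < 1 + l ^ δ := by positivity
    have hint1 := ftcA hδ hlδ (le_refl (0:ℝ))
    have hint2 := ftcA hδ h1lδ (le_refl (0:ℝ))
    have hptw : ∀ u : ℝ,
        (1 - Real.exp (-(u ^ δ))) * (δ * l ^ δ * u ^ (δ - 1) * Real.exp (-(l ^ δ * u ^ δ)))
        = δ * l ^ δ * u ^ (δ - 1) * Real.exp (-(l ^ δ * u ^ δ))
          - (l ^ δ / (1 + l ^ δ))
            * (δ * (1 + l ^ δ) * u ^ (δ - 1) * Real.exp (-((1 + l ^ δ) * u ^ δ))) := by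
      intro u
      have he : Real.exp (-((1 + l ^ δ) * u ^ δ))
          = Real.exp (-(l ^ δ * u ^ δ)) * Real.exp (-(u ^ δ)) := by
        rw [← Real.exp_add]
        ring_nf
      rw [he]
      field_simp
    have hIntegrable : IntegrableOn
        (fun u : ℝ => (1 - Real.exp (-(u ^ δ)))
          * (δ * l ^ δ * u ^ (δ - 1) * Real.exp (-(l ^ δ * u ^ δ)))) (Ioi (0:ℝ)) volume := by
      rw [show (fun u : ℝ => (1 - Real.exp (-(u ^ δ)))
          * (δ * l ^ δ * u ^ (δ - 1) * Real.exp (-(l ^ δ * u ^ δ))))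
        = fun u : ℝ => δ * l ^ δ * u ^ (δ - 1) * Real.exp (-(l ^ δ * u ^ δ))
          - (l ^ δ / (1 + l ^ δ))
            * (δ * (1 + l ^ δ) * u ^ (δ - 1) * Real.exp (-((1 + l ^ δ) * u ^ δ)))
        from funext hptw]
      exact hint1.1.sub (hint2.1.const_mul _)
    have h1 : ∫⁻ u in Ioi (0:ℝ), (∫⁻ x in Ioo 0 u, M x) * W u
        = ∫⁻ u in Ioi (0:ℝ), ENNReal.ofReal ((1 - Real.exp (-(u ^ δ)))
            * (δ * l ^ δ * u ^ (δ - 1) * Real.exp (-(l ^ δ * u ^ δ)))) := by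
      apply setLIntegral_congr_fun measurableSet_Ioi
      intro u hu
      have hu0 : (0:ℝ) < u := hu
      have hle1 : Real.exp (-(u ^ δ)) ≤ 1 :=
        Real.exp_le_one_iff.mpr (neg_nonpos.mpr (Real.rpow_nonneg hu0.le δ))
      dsimp only
      rw [claim2 u hu0, hW, ← ENNReal.ofReal_mul (by linarith)]
    rw [h1, ← ofReal_integral_eq_lintegral_ofReal hIntegrable ?hnn]
    case hnn =>
      rw [EventuallyLE, ae_restrict_iff' measurableSet_Ioi]
      apply ae_of_all
      intro u hu
      have hu0 : (0:ℝ) < u := hu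
      have hle1 : Real.exp (-(u ^ δ)) ≤ 1 :=
        Real.exp_le_one_iff.mpr (neg_nonpos.mpr (Real.rpow_nonneg hu0.le δ))
      have hw : 0 ≤ δ * l ^ δ * u ^ (δ - 1) * Real.exp (-(l ^ δ * u ^ δ)) := by positivity
      have : 0 ≤ 1 - Real.exp (-(u ^ δ)) := by linarith
      exact mul_nonneg this hw
    congr 1
    simp_rw [hptw]
    rw [integral_sub hint1.1 (hint2.1.const_mul _), hint1.2, integral_const_mul, hint2.2,
      Real.zero_rpow hδ.ne', mul_zero, neg_zero, Real.exp_zero]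
    field_simp
    simp
  -- assemble
  have key : ∫⁻ ω, ENNReal.ofReal ((1 + l * (A ω / B ω))⁻¹) ∂P
      = ENNReal.ofReal ((1 + l ^ δ)⁻¹) := by
    rw [eq1, eq2, eq4, final_u]
  have hInt0 : Integrable (fun ω => (1 + l * (A ω / B ω))⁻¹) P := by
    apply int_of_bdd ((measurable_const.add ((hAm.div hBm).const_mul l)).inv).aestronglyMeasurable
      (C := 1)
    filter_upwards [hAnn, hBpos] with ω ha hb
    have h0 : 0 ≤ A ω / B ω := div_nonneg ha hb.le
    have h1 : (1:ℝ) ≤ 1 + l * (A ω / B ω) := by nlinarith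
    rw [Real.norm_eq_abs, abs_of_nonneg (inv_nonneg.mpr (by show (0:ℝ) ≤ 1 + l * (A ω / B ω); linarith))]
    exact inv_le_one_of_one_le₀ h1
  have hnn0 : 0 ≤ᵐ[P] fun ω => (1 + l * (A ω / B ω))⁻¹ := by
    filter_upwards [hAnn, hBpos] with ω ha hb
    have h0 : 0 ≤ A ω / B ω := div_nonneg ha hb.le
    positivity
  have hfin := ofReal_integral_eq_lintegral_ofReal hInt0 hnn0
  rw [key] at hfin
  exact (ENNReal.ofReal_eq_ofReal_iff (integral_nonneg_of_ae hnn0) (by positivity)).mp hfin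
/-- Let `α ∈ (0,2]`. If `Λ` is a standard Laplace random variable
(characteristic function `1/(1+t²)`) and `S, S'` are positive strictly stable random
variables with exponent `α/2`, with `Λ, S, S'` mutually independent, then `Λ·√(S/S')`
has the Linnik distribution with parameter `α`:
`E[exp (i·t·Λ·√(S/S'))] = 1/(1+|t|^α)` for all `t ∈ ℝ`. -/
theorem linnik_is_laplace_scale_mixture
    {Ω : Type*} [MeasurableSpace Ω] (P : Measure Ω) [IsProbabilityMeasure P]
    (α : ℝ) (hα0 : 0 < α) (hα2 : α ≤ 2)
    (L S S' : Ω → ℝ) (hLm : Measurable L) (hSm : Measurable S) (hS'm : Measurable S')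
    (hL : ∀ t : ℝ,
      ∫ ω, Complex.exp (Complex.I * ((t * L ω : ℝ) : ℂ)) ∂P = (((1 + t ^ 2)⁻¹ : ℝ) : ℂ))
    (hSnn : ∀ᵐ ω ∂P, 0 ≤ S ω) (hS'nn : ∀ᵐ ω ∂P, 0 ≤ S' ω)
    (hS : ∀ s : ℝ, 0 ≤ s →
      ∫ ω, Real.exp (-(s * S ω)) ∂P = Real.exp (-(s ^ (α / 2))))
    (hS' : ∀ s : ℝ, 0 ≤ s →
      ∫ ω, Real.exp (-(s * S' ω)) ∂P = Real.exp (-(s ^ (α / 2))))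
    (hindep : iIndepFun ![L, S, S'] P) :
    ∀ t : ℝ,
      ∫ ω, Complex.exp (Complex.I * ((t * (L ω * Real.sqrt (S ω / S' ω)) : ℝ) : ℂ)) ∂P
        = (((1 + |t| ^ α)⁻¹ : ℝ) : ℂ) := by
  intro t
  by_cases ht : t = 0
  · subst ht
    simp only [zero_mul, Complex.ofReal_zero, mul_zero, Complex.exp_zero]
    rw [integral_const]
    simp [abs_zero, Real.zero_rpow hα0.ne']
  · have hδ : 0 < α / 2 := by linarith
    have hlt : 0 < t ^ 2 := by positivity
    have hmeas3 : ∀ i, Measurable (![L, S, S'] i) := by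
      intro i; fin_cases i <;> simpa
    have hYL : IndepFun (fun ω => (S ω, S' ω)) L P := by
      have := hindep.indepFun_prodMk hmeas3 1 2 0 (by decide) (by decide)
      simpa using this
    have hS'S : IndepFun S' S P := by
      have := hindep.indepFun (show (2 : Fin 3) ≠ 1 by decide)
      simpa using this
    set Y : Ω → ℝ × ℝ := fun ω => (S ω, S' ω) with hY
    have hYm : Measurable Y := hSm.prodMk hS'm
    set ν : Measure (ℝ × ℝ) := P.map Y with hν
    set μL : Measure ℝ := P.map L with hμL
    haveI : IsProbabilityMeasure ν := Measure.isProbabilityMeasure_map hYm.aemeasurable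
    haveI : IsProbabilityMeasure μL := Measure.isProbabilityMeasure_map hLm.aemeasurable
    have hmap : P.map (fun ω => (Y ω, L ω)) = ν.prod μL :=
      (indepFun_iff_map_prod_eq_prod_map_map hYm.aemeasurable hLm.aemeasurable).mp hYL
    set F : (ℝ × ℝ) × ℝ → ℂ :=
      fun p => Complex.exp (Complex.I * ((t * (p.2 * Real.sqrt (p.1.1 / p.1.2)) : ℝ) : ℂ))
      with hF
    have hFm : Measurable F := by
      apply Complex.measurable_exp.comp
      apply Measurable.const_mul
      exact Complex.measurable_ofReal.comp
        ((measurable_snd.mul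
          (Real.continuous_sqrt.measurable.comp ((measurable_fst.fst).div measurable_fst.snd))).const_mul t)
    have hFb : ∀ p, ‖F p‖ = 1 := by
      intro p
      rw [hF]
      simp [Complex.norm_exp]
    have hFint : Integrable F (ν.prod μL) :=
      (integrable_const 1).mono' hFm.aestronglyMeasurable
        (ae_of_all _ fun p => le_of_eq (hFb p))
    have hae : ∀ᵐ y ∂ν, 0 ≤ y.1 ∧ 0 ≤ y.2 := by
      have hset : MeasurableSet {y : ℝ × ℝ | 0 ≤ y.1 ∧ 0 ≤ y.2} :=
        (measurableSet_le measurable_const measurable_fst).inter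
          (measurableSet_le measurable_const measurable_snd)
      rw [hν, ae_map_iff hYm.aemeasurable hset]
      filter_upwards [hSnn, hS'nn] with ω h1 h2
      exact ⟨h1, h2⟩
    have hinner : ∀ᵐ y ∂ν, (∫ x, F (y, x) ∂μL) = (((1 + t ^ 2 * (y.1 / y.2))⁻¹ : ℝ) : ℂ) := by
      filter_upwards [hae] with y hy
      have hs : Real.sqrt (y.1 / y.2) ^ 2 = y.1 / y.2 := Real.sq_sqrt (div_nonneg hy.1 hy.2)
      have hgm : Measurable fun x : ℝ => F (y, x) := hFm.comp (measurable_prodMk_left)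
      calc ∫ x, F (y, x) ∂μL = ∫ ω, F (y, L ω) ∂P := by
            rw [hμL, integral_map hLm.aemeasurable hgm.aestronglyMeasurable]
        _ = ∫ ω, Complex.exp (Complex.I
              * (((t * Real.sqrt (y.1 / y.2)) * L ω : ℝ) : ℂ)) ∂P := by
            apply integral_congr_ae
            apply ae_of_all
            intro ω
            rw [hF]
            simp only []
            rw [show t * (L ω * Real.sqrt (y.1 / y.2))
              = (t * Real.sqrt (y.1 / y.2)) * L ω from by ring]
        _ = (((1 + (t * Real.sqrt (y.1 / y.2)) ^ 2)⁻¹ : ℝ) : ℂ) := hL _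
        _ = (((1 + t ^ 2 * (y.1 / y.2))⁻¹ : ℝ) : ℂ) := by rw [mul_pow, hs]
    have hreal_meas : Measurable fun y : ℝ × ℝ => (1 + t ^ 2 * (y.1 / y.2))⁻¹ :=
      (measurable_const.add ((measurable_fst.div measurable_snd).const_mul _)).inv
    have habs : (t ^ 2 : ℝ) ^ (α / 2 : ℝ) = |t| ^ α := by
      rw [show (t ^ 2 : ℝ) = |t| ^ (2 : ℕ) from (sq_abs t).symm,
        ← Real.rpow_natCast |t| 2, ← Real.rpow_mul (abs_nonneg t)]
      norm_num
      rw [show (2:ℝ) * (α / 2) = α by ring]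
    calc ∫ ω, Complex.exp (Complex.I * ((t * (L ω * Real.sqrt (S ω / S' ω)) : ℝ) : ℂ)) ∂P
        = ∫ ω, F (Y ω, L ω) ∂P := rfl
      _ = ∫ p, F p ∂(P.map fun ω => (Y ω, L ω)) :=
          (integral_map (hYm.prodMk hLm).aemeasurable hFm.aestronglyMeasurable).symm
      _ = ∫ p, F p ∂(ν.prod μL) := by rw [hmap]
      _ = ∫ y, (∫ x, F (y, x) ∂μL) ∂ν := integral_prod F hFint
      _ = ∫ y, (((1 + t ^ 2 * (y.1 / y.2))⁻¹ : ℝ) : ℂ) ∂ν := integral_congr_ae hinner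
      _ = ((∫ y, (1 + t ^ 2 * (y.1 / y.2))⁻¹ ∂ν : ℝ) : ℂ) := integral_ofReal
      _ = ((∫ ω, (1 + t ^ 2 * (S ω / S' ω))⁻¹ ∂P : ℝ) : ℂ) := by
          rw [hν, integral_map hYm.aemeasurable hreal_meas.aestronglyMeasurable]
      _ = (((1 + (t ^ 2) ^ (α / 2))⁻¹ : ℝ) : ℂ) := by
          rw [core P hδ hSm hS'm hS'S hSnn hS'nn hS hS' hlt]
      _ = (((1 + |t| ^ α)⁻¹ : ℝ) : ℂ) := by rw [habs]
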